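/- For every integer p ≥ 2 and N ≥ 1, the sum ∑_{j∈ℤ} ( ∫_{2^j}^{2^{j+1}} e^{−2Nt/(p−1)} dt )^{(p−1)/(2p−1)} is bounded above by C (2p−1)^{(p−1)/(2p−1)} for an absolute constant C independent of p. -/

import Mathlib

open MeasureTheory Filter Metric Complex
open scoped ENNReal Topology NNReal ComplexConjugate

noncomputable section

/-- `ℝ^{2N}`. -/
abbrev Esp (N : ℕ) := EuclideanSpace ℝ (Fin (2*N))

/-- the unit sphere `S^{2N-1}`. -/
abbrev sphereM (N : ℕ) := Metric.sphere (0 : Esp N) 1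

/-- surface measure on the unit sphere. -/
def sphMeas (N : ℕ) : Measure (sphereM N) := (volume : Measure (Esp N)).toSphere

/-- measure on `ℝ₊ × S^{2N-1}`. -/
def muP (N : ℕ) : Measure (ℝ × sphereM N) :=
  ((volume : Measure ℝ).restrict (Set.Ioi 0)).prod (sphMeas N)

/-- Fourier transform `û(ξ) = ∫ e^{-ix·ξ} u(x) dx`. -/
def fint {N : ℕ} (u : Esp N → ℂ) (ξ : Esp N) : ℂ :=
  ∫ x : Esp N, Complex.exp (-Complex.I * ((inner ℝ x ξ : ℝ) : ℂ)) * u x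

/-- inverse Fourier transform `(2π)^{-2N} ∫ e^{ix·ξ} F(ξ) dξ`. -/
def invFint (N : ℕ) (F : Esp N → ℂ) (x : Esp N) : ℂ :=
  ((((2*Real.pi)^(2*N))⁻¹ : ℝ) : ℂ) *
    ∫ ξ : Esp N, Complex.exp (Complex.I * ((inner ℝ x ξ : ℝ) : ℂ)) * F ξ

/-- squared nonhomogeneous Sobolev `H^N` norm `∫ (1+|ξ|²)^N |û(ξ)|² dξ`. -/
def sobNormSq (N : ℕ) (u : Esp N → ℂ) : ℝ :=
  ∫ ξ : Esp N, (1 + ‖ξ‖^2)^N * ‖fint u ξ‖^2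

/-- `ω_{2N-1} = 2π^N/(N-1)!`, the surface measure of `S^{2N-1}`. -/
def omegaS (N : ℕ) : ℝ := 2 * Real.pi ^ N / (N-1).factorial

/-- `β_N = 2N π^{2N} 2^{2N} / ω_{2N-1}`. -/
def betaN (N : ℕ) : ℝ := 2 * N * Real.pi ^ (2*N) * 2 ^ (2*N) / omegaS N

/-- `C_N = (2π)^{-N} ω_{2N-1}^{-1/2}`. -/
def CN (N : ℕ) : ℝ := ((2*Real.pi)^N)⁻¹ * (Real.sqrt (omegaS N))⁻¹

/-- `C̃_N = ω_{2N-1}^{1/2} (2π)^{-N}`. -/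
def CtN (N : ℕ) : ℝ := Real.sqrt (omegaS N) * ((2*Real.pi)^N)⁻¹

/-- Luxemburg norm of the Orlicz space associated to `φ(s) = e^{s²}-1`. -/
def orliczNorm {d : ℕ} (u : EuclideanSpace ℝ (Fin d) → ℂ) : ℝ :=
  sInf {l : ℝ | 0 < l ∧
    (∫⁻ x, ENNReal.ofReal (Real.exp ((‖u x‖ / l)^2) - 1)) ≤ 1}

/-- the `𝓑` norm: `sup_j (∫_S ∫_{2^j}^{2^{j+1}} |w(t,ω)|² dt dω)^{1/2}`. -/
def Bnorm (N : ℕ) (w : ℝ → Esp N → ℂ) : ℝ :=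
  ⨆ j : ℤ, Real.sqrt (∫ ω : sphereM N,
    (∫ t in Set.Icc ((2:ℝ)^j) ((2:ℝ)^(j+1)), ‖w t (ω : Esp N)‖^2) ∂(sphMeas N))

/-- the modulation `e^{i x · e^{a t} ω}`. -/
def modPhase (N : ℕ) (x : Esp N) (a t : ℝ) (ω : sphereM N) : ℂ :=
  Complex.exp (Complex.I * ((inner ℝ x (Real.exp (a * t) • (ω : Esp N)) : ℝ) : ℂ))

/-- the set `𝒫(r_n)` of weak `L²` limits of modulated subsequences. -/
def weakLimSet (N : ℕ) (α : ℕ → ℝ) (r : ℕ → ℝ → Esp N → ℂ) :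
    Set (ℝ × sphereM N → ℂ) :=
  {H | MemLp H 2 (muP N) ∧ ∃ (x : ℕ → Esp N) (σ : ℕ → ℕ), StrictMono σ ∧
    ∀ g : ℝ × sphereM N → ℂ, MemLp g 2 (muP N) →
      Tendsto (fun k => ∫ p, modPhase N (x k) (α (σ k)) p.1 p.2 *
          r (σ k) p.1 (p.2 : Esp N) * conj (g p) ∂(muP N))
        atTop (𝓝 (∫ p, H p * conj (g p) ∂(muP N)))}

/-- `η(r_n) = sup_{H ∈ 𝒫(r_n)} ‖H‖²_{L²}`. -/
def etaFn (N : ℕ) (α : ℕ → ℝ) (r : ℕ → ℝ → Esp N → ℂ) : ℝ :=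
  sSup {c | ∃ H ∈ weakLimSet N α r, c = (eLpNorm H 2 (muP N)).toReal ^ 2}
lemma aux_two_mul_le (n : ℕ) (hn : 1 ≤ n) : 2 * n ≤ 2 ^ n := by
  induction n with
  | zero => omega
  | succ k ih =>
    rcases Nat.lt_or_ge k 1 with h | h
    · interval_cases k <;> norm_num
    · have := ih h
      have : 2 ^ (k+1) = 2 * 2^k := by ring
      omega

set_option maxHeartbeats 1000000 in
/-- Dyadic summation estimate:
`∑_{j∈ℤ} (∫_{2^j}^{2^{j+1}} e^{-2Nt/(p-1)} dt)^{(p-1)/(2p-1)} ≤ C (2p-1)^{(p-1)/(2p-1)}`. -/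
theorem stmt4 :
    ∃ C : ℝ, 0 < C ∧ ∀ N p : ℕ, 1 ≤ N → 2 ≤ p →
      (∑' j : ℤ, (∫ t in Set.Icc ((2:ℝ)^j) ((2:ℝ)^(j+1)),
          Real.exp (-(2*(N:ℝ)*t)/((p:ℝ)-1))) ^ (((p:ℝ)-1)/(2*(p:ℝ)-1)))
        ≤ C * (2*(p:ℝ)-1) ^ (((p:ℝ)-1)/(2*(p:ℝ)-1)) := by
  refine ⟨100, by norm_num, ?_⟩
  intro N p hN hp
  have hp2 : (2:ℝ) ≤ (p:ℝ) := by exact_mod_cast hp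
  have hN1 : (1:ℝ) ≤ (N:ℝ) := by exact_mod_cast hN
  set q : ℝ := ((p:ℝ)-1)/(2*(p:ℝ)-1) with hq
  have hq13 : (1:ℝ)/3 ≤ q := by
    rw [hq, div_le_div_iff₀ (by norm_num) (by linarith)]; linarith
  have hq12 : q ≤ 1/2 := by
    rw [hq, div_le_div_iff₀ (by linarith) (by norm_num)]; linarith
  have hq0 : 0 < q := by linarith
  have hp1 : (0:ℝ) < (p:ℝ) - 1 := by linarith
  set a : ℝ := 2*(N:ℝ)/((p:ℝ)-1) with ha
  have ha0 : 0 < a := by positivity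
  set b : ℝ := ((p:ℝ)-1)/(2*(N:ℝ)) with hb
  have hb0 : 0 < b := by positivity
  have hab : a * b = 1 := by
    rw [ha, hb]; field_simp
  set j0 : ℤ := ⌈Real.logb 2 b⌉ with hj0
  have h1 : b ≤ (2:ℝ)^j0 := by
    calc b = (2:ℝ) ^ Real.logb 2 b := (Real.rpow_logb (by norm_num) (by norm_num) hb0).symm
    _ ≤ (2:ℝ) ^ ((j0:ℝ)) := Real.rpow_le_rpow_of_exponent_le one_le_two (Int.le_ceil _)
    _ = (2:ℝ)^j0 := Real.rpow_intCast 2 j0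
  have h2 : (2:ℝ)^j0 ≤ 2*b := by
    calc (2:ℝ)^j0 = (2:ℝ)^((j0:ℝ)) := (Real.rpow_intCast 2 j0).symm
    _ ≤ (2:ℝ)^(Real.logb 2 b + 1) := by
        apply Real.rpow_le_rpow_of_exponent_le one_le_two
        have := Int.ceil_lt_add_one (Real.logb 2 b)
        exact_mod_cast this.le
    _ = 2*b := by
        rw [Real.rpow_add (by norm_num), Real.rpow_logb (by norm_num) (by norm_num) hb0,
          Real.rpow_one]; ring
  -- integral bound
  have hIb : ∀ j : ℤ, (∫ t in Set.Icc ((2:ℝ)^j) ((2:ℝ)^(j+1)),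
      Real.exp (-(2*(N:ℝ)*t)/((p:ℝ)-1))) ≤ (2:ℝ)^j * Real.exp (-(a * (2:ℝ)^j)) := by
    intro j
    have hle : ((2:ℝ)^j) ≤ ((2:ℝ)^(j+1)) :=
      zpow_le_zpow_right₀ one_le_two (by omega)
    have hcont : Continuous fun t : ℝ => Real.exp (-(2*(N:ℝ)*t)/((p:ℝ)-1)) := by
      fun_prop
    have hvol : volume (Set.Icc ((2:ℝ)^j) ((2:ℝ)^(j+1))) < ⊤ := by
      rw [Real.volume_Icc]; exact ENNReal.ofReal_lt_top
    have hmono : ∀ t ∈ Set.Icc ((2:ℝ)^j) ((2:ℝ)^(j+1)),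
        Real.exp (-(2*(N:ℝ)*t)/((p:ℝ)-1)) ≤ Real.exp (-(a * (2:ℝ)^j)) := by
      intro t ht
      apply Real.exp_le_exp.2
      have h1t : (2:ℝ)^j ≤ t := ht.1
      have heq : -(2*(N:ℝ)*t)/((p:ℝ)-1) = -(a*t) := by rw [ha]; ring
      rw [heq]
      nlinarith
    calc (∫ t in Set.Icc ((2:ℝ)^j) ((2:ℝ)^(j+1)), Real.exp (-(2*(N:ℝ)*t)/((p:ℝ)-1)))
        ≤ ∫ _t in Set.Icc ((2:ℝ)^j) ((2:ℝ)^(j+1)), Real.exp (-(a * (2:ℝ)^j)) :=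
          setIntegral_mono_on (hcont.integrableOn_Icc)
            (integrableOn_const hvol.ne (by simp)) measurableSet_Icc hmono
    _ = (2:ℝ)^j * Real.exp (-(a * (2:ℝ)^j)) := by
        rw [setIntegral_const, measureReal_def, Real.volume_Icc, smul_eq_mul,
          ENNReal.toReal_ofReal (by linarith)]
        congr 1
        rw [zpow_add_one₀ (two_ne_zero)]; ring
  have hInonneg : ∀ j : ℤ, 0 ≤ ∫ t in Set.Icc ((2:ℝ)^j) ((2:ℝ)^(j+1)),
      Real.exp (-(2*(N:ℝ)*t)/((p:ℝ)-1)) :=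
    fun j => integral_nonneg fun t => (Real.exp_pos _).le
  -- the ratio fact
  have hr : (2:ℝ)^(-(1/3):ℝ) ≤ 4/5 := by
    have h3 : ((2:ℝ)^(-(1/3):ℝ))^(3:ℕ) = 1/2 := by
      rw [← Real.rpow_natCast ((2:ℝ)^(-(1/3):ℝ)) 3, ← Real.rpow_mul (by norm_num)]
      norm_num [Real.rpow_neg_one]
    apply le_of_pow_le_pow_left₀ (n := 3) (by norm_num) (by norm_num)
    rw [h3]; norm_num
  have hrpow : ∀ n : ℕ, (2:ℝ)^(-(n:ℝ)/3) = ((2:ℝ)^(-(1/3):ℝ))^n := by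
    intro n
    rw [← Real.rpow_natCast ((2:ℝ)^(-(1/3):ℝ)) n, ← Real.rpow_mul (by norm_num)]
    ring_nf
  -- key per-term bound
  have key : ∀ j : ℤ, (∫ t in Set.Icc ((2:ℝ)^j) ((2:ℝ)^(j+1)),
      Real.exp (-(2*(N:ℝ)*t)/((p:ℝ)-1)))^q ≤ 2 * b^q * (4/5:ℝ)^((j - j0).natAbs) := by
    intro j
    have step1 : (∫ t in Set.Icc ((2:ℝ)^j) ((2:ℝ)^(j+1)),
        Real.exp (-(2*(N:ℝ)*t)/((p:ℝ)-1)))^q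
        ≤ ((2:ℝ)^j * Real.exp (-(a * (2:ℝ)^j)))^q :=
      Real.rpow_le_rpow (hInonneg j) (hIb j) hq0.le
    refine step1.trans ?_
    set m : ℤ := j - j0 with hm
    have hjm : j = j0 + m := by omega
    have h2j : (2:ℝ)^j = (2:ℝ)^j0 * (2:ℝ)^m := by rw [hjm, zpow_add₀ two_ne_zero]
    have hsplit : ((2:ℝ)^j * Real.exp (-(a * (2:ℝ)^j)))^q
        = ((2:ℝ)^j)^q * (Real.exp (-(a * (2:ℝ)^j)))^q :=
      Real.mul_rpow (by positivity) (Real.exp_pos _).le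
    rw [hsplit]
    have hbj : ((2:ℝ)^j)^q ≤ 2 * b^q * ((2:ℝ)^m)^q := by
      have hle1 : (2:ℝ)^j ≤ (2*b) * (2:ℝ)^m := by
        rw [h2j]; exact mul_le_mul_of_nonneg_right h2 (by positivity)
      calc ((2:ℝ)^j)^q ≤ ((2*b) * (2:ℝ)^m)^q :=
            Real.rpow_le_rpow (by positivity) hle1 hq0.le
      _ = (2:ℝ)^q * b^q * ((2:ℝ)^m)^q := by
          rw [Real.mul_rpow (by positivity) (by positivity),
            Real.mul_rpow (by norm_num) hb0.le]
      _ ≤ 2 * b^q * ((2:ℝ)^m)^q := by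
          have h2q : (2:ℝ)^q ≤ 2 := by
            calc (2:ℝ)^q ≤ (2:ℝ)^(1:ℝ) :=
                  Real.rpow_le_rpow_of_exponent_le one_le_two (by linarith)
            _ = 2 := Real.rpow_one 2
          gcongr
    have hcore : ((2:ℝ)^m)^q * (Real.exp (-(a * (2:ℝ)^j)))^q ≤ (4/5:ℝ)^(m.natAbs) := by
      rcases le_or_gt m 0 with hm0 | hm1
      · -- small j: drop the exponential
        have hexp : (Real.exp (-(a * (2:ℝ)^j)))^q ≤ 1 := by
          apply Real.rpow_le_one (Real.exp_pos _).le _ hq0.le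
          rw [Real.exp_le_one_iff]
          have : (0:ℝ) < (2:ℝ)^j := zpow_pos two_pos j
          nlinarith
        have h2mq : ((2:ℝ)^m)^q ≤ (4/5:ℝ)^(m.natAbs) := by
          have e1 : ((2:ℝ)^m)^q = (2:ℝ)^((m:ℝ)*q) := (Real.rpow_intCast_mul (by norm_num) m q).symm
          rw [e1]
          have hmr : (m:ℝ) ≤ 0 := by exact_mod_cast hm0
          have hstep : (m:ℝ)*q ≤ -((m.natAbs:ℝ))/3 := by
            have hnr : ((m.natAbs : ℕ) : ℝ) = -(m:ℝ) := by
              have habs : ((m.natAbs : ℕ) : ℝ) = |(m:ℝ)| := by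
                rw [Nat.cast_natAbs, Int.cast_abs]
              rw [habs, abs_of_nonpos hmr]
            rw [hnr]
            nlinarith
          calc (2:ℝ)^((m:ℝ)*q) ≤ (2:ℝ)^(-((m.natAbs:ℝ))/3) :=
                Real.rpow_le_rpow_of_exponent_le one_le_two hstep
          _ = ((2:ℝ)^(-(1/3):ℝ))^(m.natAbs) := hrpow _
          _ ≤ (4/5:ℝ)^(m.natAbs) := pow_le_pow_left₀ (by positivity) hr _
        calc ((2:ℝ)^m)^q * (Real.exp (-(a * (2:ℝ)^j)))^q
            ≤ ((2:ℝ)^m)^q * 1 := by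
              apply mul_le_mul_of_nonneg_left hexp (Real.rpow_nonneg (by positivity) q)
        _ = ((2:ℝ)^m)^q := mul_one _
        _ ≤ (4/5:ℝ)^(m.natAbs) := h2mq
      · -- large j
        have hm1' : (1:ℝ) ≤ (m:ℝ) := by exact_mod_cast hm1
        have hmabs : ((m.natAbs:ℝ)) = (m:ℝ) := by
          have habs : ((m.natAbs : ℕ) : ℝ) = |(m:ℝ)| := by
            rw [Nat.cast_natAbs, Int.cast_abs]
          rw [habs]
          exact abs_of_nonneg (by exact_mod_cast hm1.le)
        have hax : (2:ℝ)^m ≤ a * (2:ℝ)^j := by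
          have h0 : (0:ℝ) < (2:ℝ)^m := zpow_pos two_pos m
          calc (2:ℝ)^m = a * (b * (2:ℝ)^m) := by rw [← mul_assoc, hab, one_mul]
          _ ≤ a * ((2:ℝ)^j0 * (2:ℝ)^m) :=
              mul_le_mul_of_nonneg_left (mul_le_mul_of_nonneg_right h1 h0.le) ha0.le
          _ = a * (2:ℝ)^j := by rw [h2j]
        have hexpq : (Real.exp (-(a * (2:ℝ)^j)))^q = Real.exp (-(a * (2:ℝ)^j) * q) :=
          (Real.exp_mul _ q).symm
        have hexp2 : Real.exp (-(a * (2:ℝ)^j) * q) ≤ Real.exp (-((2:ℝ)^m/3)) := by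
          apply Real.exp_le_exp.2
          have h0 : (0:ℝ) < (2:ℝ)^m := zpow_pos two_pos m
          have hle : (2:ℝ)^m * (1/3) ≤ (a * (2:ℝ)^j) * q :=
            mul_le_mul hax (by linarith) (by norm_num) (by positivity)
          linarith
        have h2mq : ((2:ℝ)^m)^q ≤ (2:ℝ)^((m:ℝ)/2) := by
          rw [← Real.rpow_intCast_mul (by norm_num : (0:ℝ) ≤ 2) m q]
          apply Real.rpow_le_rpow_of_exponent_le one_le_two
          have := mul_le_mul_of_nonneg_left hq12 (by linarith : (0:ℝ) ≤ (m:ℝ))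
          linarith
        have h2mle : 2*(m:ℝ) ≤ (2:ℝ)^m := by
          have hn := aux_two_mul_le m.toNat (by omega)
          have e : (2:ℝ)^m = (2:ℝ)^(m.toNat:ℕ) := by
            rw [← zpow_natCast]
            congr 1
            omega
          have em : (m.toNat:ℝ) = (m:ℝ) := by exact_mod_cast (by omega : ((m.toNat:ℕ):ℤ) = m)
          have h2 : ((2*m.toNat : ℕ):ℝ) ≤ ((2^m.toNat : ℕ):ℝ) := by exact_mod_cast hn
          push_cast at h2
          rw [e]
          push_cast
          linarith [h2, em.le, em.ge]
        have hfin : (2:ℝ)^((m:ℝ)/2) * Real.exp (-((2:ℝ)^m/3)) ≤ (4/5:ℝ)^(m.natAbs) := by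
          have hlog : Real.log 2 ≤ 0.7 := by
            have := Real.log_two_lt_d9
            linarith
          have hlog0 : 0 < Real.log 2 := Real.log_pos (by norm_num)
          have h45 : Real.exp (Real.log 2 * (-(m:ℝ)/3)) ≤ (4/5:ℝ)^(m.natAbs) := by
            rw [← Real.rpow_def_of_pos (by norm_num : (0:ℝ) < 2)]
            rw [show -(m:ℝ)/3 = -((m.natAbs:ℝ))/3 by rw [hmabs]]
            rw [hrpow]
            exact pow_le_pow_left₀ (by positivity) hr _
          rw [Real.rpow_def_of_pos (by norm_num : (0:ℝ) < 2), ← Real.exp_add]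
          refine le_trans (Real.exp_le_exp.2 ?_) h45
          have hlm : Real.log 2 * (m:ℝ) ≤ 0.7 * (m:ℝ) :=
            mul_le_mul_of_nonneg_right hlog (by linarith)
          linarith [hlm, h2mle, hm1']
        calc ((2:ℝ)^m)^q * (Real.exp (-(a * (2:ℝ)^j)))^q
            ≤ (2:ℝ)^((m:ℝ)/2) * Real.exp (-((2:ℝ)^m/3)) := by
              rw [hexpq]
              apply mul_le_mul h2mq hexp2 (Real.exp_pos _).le (by positivity)
        _ ≤ (4/5:ℝ)^(m.natAbs) := hfin
    calc ((2:ℝ)^j)^q * (Real.exp (-(a * (2:ℝ)^j)))^q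
        ≤ (2 * b^q * ((2:ℝ)^m)^q) * (Real.exp (-(a * (2:ℝ)^j)))^q :=
          mul_le_mul_of_nonneg_right hbj (Real.rpow_nonneg (Real.exp_pos _).le q)
    _ = 2 * b^q * (((2:ℝ)^m)^q * (Real.exp (-(a * (2:ℝ)^j)))^q) := by ring
    _ ≤ 2 * b^q * (4/5:ℝ)^(m.natAbs) := by
        apply mul_le_mul_of_nonneg_left hcore
        positivity
  -- summation
  have hgeoS := hasSum_geometric_of_lt_one (by norm_num : (0:ℝ) ≤ 4/5) (by norm_num : (4/5:ℝ) < 1)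
  have hc : ∀ n : ℕ, (4/5:ℝ)^((-((n:ℤ)+1)).natAbs) = (4/5)*(4/5:ℝ)^n := fun n => by
    rw [(by omega : ((-((n:ℤ)+1))).natAbs = n+1), pow_succ]; ring
  have hs1 : HasSum (fun n : ℕ => (4/5:ℝ)^((n:ℤ).natAbs)) ((1-4/5:ℝ)⁻¹) :=
    hgeoS.congr_fun (fun n => by simp)
  have hs2 : HasSum (fun n : ℕ => (4/5:ℝ)^((-((n:ℤ)+1)).natAbs)) ((4/5) * (1-4/5:ℝ)⁻¹) :=
    (hgeoS.mul_left (4/5)).congr_fun hc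
  have hZ := HasSum.of_nat_of_neg_add_one (f := fun m : ℤ => (4/5:ℝ)^(m.natAbs)) hs1 hs2
  have hZ9 : HasSum (fun j : ℤ => (4/5:ℝ)^((j - j0).natAbs)) 9 := by
    have h1' := ((Equiv.subRight j0).hasSum_iff
      (f := fun m : ℤ => (4/5:ℝ)^(m.natAbs))).mpr hZ
    have h2' : HasSum (fun j : ℤ => (4/5:ℝ)^((j - j0).natAbs))
        ((1-(4/5:ℝ))⁻¹ + 4/5 * (1-(4/5:ℝ))⁻¹) :=
      h1'.congr_fun (fun j => by simp [Function.comp])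
    have hv : ((1:ℝ)-4/5)⁻¹ + 4/5 * ((1:ℝ)-4/5)⁻¹ = 9 := by norm_num
    exact hv ▸ h2'
  have hR := hZ9.mul_left (2 * b^q)
  have hsumR : Summable (fun j : ℤ => 2 * b^q * (4/5:ℝ)^((j - j0).natAbs)) := hR.summable
  have hsumI : Summable (fun j : ℤ => (∫ t in Set.Icc ((2:ℝ)^j) ((2:ℝ)^(j+1)),
      Real.exp (-(2*(N:ℝ)*t)/((p:ℝ)-1)))^q) :=
    Summable.of_nonneg_of_le (fun j => Real.rpow_nonneg (hInonneg j) q) key hsumR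
  have hbq : b^q ≤ (2*(p:ℝ)-1)^q := by
    rcases le_or_gt b 1 with hb1 | hb1
    · calc b^q ≤ 1 := Real.rpow_le_one hb0.le hb1 hq0.le
      _ ≤ (2*(p:ℝ)-1)^q := Real.one_le_rpow (by linarith) hq0.le
    · apply Real.rpow_le_rpow hb0.le _ hq0.le
      have : b ≤ (p:ℝ) - 1 := by
        rw [hb]
        apply div_le_self (by linarith) (by linarith)
      linarith
  calc (∑' j : ℤ, (∫ t in Set.Icc ((2:ℝ)^j) ((2:ℝ)^(j+1)),
          Real.exp (-(2*(N:ℝ)*t)/((p:ℝ)-1)))^q)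
      ≤ ∑' j : ℤ, 2 * b^q * (4/5:ℝ)^((j - j0).natAbs) := Summable.tsum_le_tsum key hsumI hsumR
  _ = 2 * b^q * 9 := hR.tsum_eq
  _ ≤ 100 * (2*(p:ℝ)-1)^q := by
      have h0 : (0:ℝ) ≤ (2*(p:ℝ)-1)^q := Real.rpow_nonneg (by linarith) q
      nlinarith
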